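/- Let g be a finite nonnegative Borel measure on [0,∞) with g({0}) = 0, and let α ≥ 0 and ε > 0. Then √(N_α(g,ε)) ≤ ∫₀¹ σ^{α/2 − 1} √(A_α(g, εσ)) dσ, where both sides are interpreted in [0,∞]. -/

import Mathlib

open MeasureTheory Set
open scoped ENNReal

/-- `N₀(g,ε) = ∫_{[0,ε]} (1 - x/ε)² dg(x)`, valued in `[0,∞]`. -/
noncomputable def N0e (g : Measure ℝ) (ε : ℝ) : ℝ≥0∞ :=
  ∫⁻ x in Icc (0:ℝ) ε, ENNReal.ofReal ((1 - x / ε) ^ 2) ∂g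

/-- `N_α(g,ε) = ε^{-α} N₀(g,ε)`, valued in `[0,∞]`. -/
noncomputable def NalphaE (g : Measure ℝ) (α ε : ℝ) : ℝ≥0∞ :=
  ENNReal.ofReal (ε ^ (-α)) * N0e g ε

/-- `A_α(g,ε) = ε^{-α} ∫_{[0,ε]} (x/ε)² dg(x)`, valued in `[0,∞]`. -/
noncomputable def Ae (g : Measure ℝ) (α ε : ℝ) : ℝ≥0∞ :=
  ENNReal.ofReal (ε ^ (-α)) * ∫⁻ x in Icc (0:ℝ) ε, ENNReal.ofReal ((x / ε) ^ 2) ∂g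

lemma ennreal_rpow_two (a : ℝ≥0∞) : a ^ (2:ℝ) = a ^ 2 := by
  rw [show (2:ℝ) = ((2:ℕ):ℝ) by norm_num, ENNReal.rpow_natCast]

lemma sq_rpow_half (a : ℝ≥0∞) : (a ^ 2) ^ (1/2:ℝ) = a := by
  rw [← ennreal_rpow_two, ← ENNReal.rpow_mul]
  norm_num

/-- Minkowski's integral inequality for `p = 2`, `ℝ≥0∞`-valued. -/
lemma minkowski2 {X Y : Type*} [MeasurableSpace X] [MeasurableSpace Y]
    (μ : Measure X) (ν : Measure Y) [IsFiniteMeasure μ] [SFinite ν]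
    (H : X → Y → ℝ≥0∞) (hH : Measurable (Function.uncurry H))
    (hbd : ∀ᵐ x ∂μ, (∫⁻ y, H x y ∂ν) ≤ 1) :
    (∫⁻ x, (∫⁻ y, H x y ∂ν) ^ 2 ∂μ) ^ (1/2:ℝ) ≤
      ∫⁻ y, (∫⁻ x, H x y ^ 2 ∂μ) ^ (1/2:ℝ) ∂ν := by
  set Φ : X → ℝ≥0∞ := fun x => ∫⁻ y, H x y ∂ν with hΦdef
  have hΦ : Measurable Φ := hH.lintegral_prod_right'
  set S := ∫⁻ x, Φ x ^ 2 ∂μ with hSdef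
  set T := ∫⁻ y, (∫⁻ x, H x y ^ 2 ∂μ) ^ (1/2:ℝ) ∂ν with hTdef
  have hS_top : S ≠ ⊤ := by
    have : S ≤ ∫⁻ _x, 1 ∂μ := by
      refine lintegral_mono_ae (hbd.mono fun x hx => ?_)
      calc Φ x ^ 2 ≤ 1 ^ 2 := pow_le_pow_left' hx 2
        _ = 1 := one_pow 2
    refine ne_top_of_le_ne_top ?_ this
    simp [lintegral_const, measure_ne_top]
  have hSh_top : S ^ (1/2:ℝ) ≠ ⊤ := ENNReal.rpow_ne_top_of_nonneg (by norm_num) hS_top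
  have key : S ≤ S ^ (1/2:ℝ) * T := by
    have hconj : Real.HolderConjugate 2 2 := Real.HolderConjugate.two_two
    calc S = ∫⁻ x, Φ x * Φ x ∂μ := by simp [hSdef, sq]
      _ = ∫⁻ x, ∫⁻ y, Φ x * H x y ∂ν ∂μ := by
          refine lintegral_congr fun x => ?_
          rw [lintegral_const_mul _ (hH.of_uncurry_left)]
      _ = ∫⁻ y, ∫⁻ x, Φ x * H x y ∂μ ∂ν := by
          refine lintegral_lintegral_swap ?_
          exact ((hΦ.comp measurable_fst).mul hH).aemeasurable
      _ ≤ ∫⁻ y, S ^ (1/2:ℝ) * (∫⁻ x, H x y ^ 2 ∂μ) ^ (1/2:ℝ) ∂ν := by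
          refine lintegral_mono fun y => ?_
          have := ENNReal.lintegral_mul_le_Lp_mul_Lq μ hconj hΦ.aemeasurable
            (hH.of_uncurry_right).aemeasurable (f := Φ) (g := fun x => H x y)
          simpa [ennreal_rpow_two] using this
      _ = S ^ (1/2:ℝ) * T := lintegral_const_mul' _ _ hSh_top
  rcases eq_or_ne S 0 with h0 | h0
  · simp [h0, ENNReal.zero_rpow_of_pos, one_half_pos]
  · have hSh0 : S ^ (1/2:ℝ) ≠ 0 := by
      simp [ENNReal.rpow_eq_zero_iff, h0, hS_top]
    have : S ^ (1/2:ℝ) * S ^ (1/2:ℝ) ≤ S ^ (1/2:ℝ) * T := by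
      calc S ^ (1/2:ℝ) * S ^ (1/2:ℝ) = S ^ ((1/2:ℝ) + (1/2:ℝ)) :=
            (ENNReal.rpow_add _ _ h0 hS_top).symm
        _ = S := by norm_num
        _ ≤ S ^ (1/2:ℝ) * T := key
    exact (ENNReal.mul_le_mul_iff_right hSh0 hSh_top).1 this

theorem stmt2 (g : Measure ℝ) [IsFiniteMeasure g] (hsupp : g (Iio (0:ℝ)) = 0)
    (h0 : g ({0} : Set ℝ) = 0) (α ε : ℝ) (hα : 0 ≤ α) (hε : 0 < ε) :
    (NalphaE g α ε) ^ (1/2 : ℝ) ≤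
      ∫⁻ σ in Ioc (0:ℝ) 1,
        ENNReal.ofReal (σ ^ (α / 2 - 1)) * (Ae g α (ε * σ)) ^ (1/2 : ℝ) := by
  -- replace Icc by Ioc everywhere (the point 0 is g-null)
  have hIccIoc : ∀ (δ : ℝ), 0 ≤ δ → ∀ f : ℝ → ℝ≥0∞,
      ∫⁻ x in Icc (0:ℝ) δ, f x ∂g = ∫⁻ x in Ioc (0:ℝ) δ, f x ∂g := by
    intro δ hδ f
    have hset : Icc (0:ℝ) δ = {0} ∪ Ioc 0 δ := by
      ext t
      simp only [mem_Icc, mem_union, mem_singleton_iff, mem_Ioc]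
      constructor
      · rintro ⟨h1, h2⟩
        rcases h1.eq_or_lt with h | h
        · exact Or.inl h.symm
        · exact Or.inr ⟨h, h2⟩
      · rintro (rfl | ⟨h1, h2⟩)
        · exact ⟨le_refl 0, hδ⟩
        · exact ⟨h1.le, h2⟩
    rw [hset, lintegral_union measurableSet_Ioc (by simp [Set.disjoint_left]),
      setLIntegral_measure_zero _ _ h0, zero_add]
  -- the kernel
  set K : Set (ℝ × ℝ) := {p : ℝ × ℝ | p.1 ≤ ε * p.2} with hKdef
  have hK : MeasurableSet K := measurableSet_le measurable_fst (measurable_const.mul measurable_snd)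
  set H : ℝ → ℝ → ℝ≥0∞ := fun x σ =>
    ENNReal.ofReal (σ⁻¹ ^ 2 * (x / ε)) * K.indicator 1 (x, σ) with hHdef
  have hH : Measurable (Function.uncurry H) := by
    have : Measurable fun p : ℝ × ℝ =>
        ENNReal.ofReal (p.2⁻¹ ^ 2 * (p.1 / ε)) * K.indicator 1 p :=
      (ENNReal.measurable_ofReal.comp
        (((measurable_snd.inv).pow_const 2).mul (measurable_fst.div_const ε))).mul
        (measurable_one.indicator hK)
    exact this
  set J : ℝ → ℝ≥0∞ := fun δ => ∫⁻ x in Ioc (0:ℝ) δ, ENNReal.ofReal ((x / δ) ^ 2) ∂g with hJdef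
  -- Step A: the σ-integral of the kernel
  have hA : ∀ x ∈ Ioc (0:ℝ) ε,
      (∫⁻ σ in Ioc (0:ℝ) 1, H x σ) = ENNReal.ofReal (1 - x / ε) := by
    intro x hx
    obtain ⟨hx0, hxε⟩ := hx
    have hq0 : 0 < x / ε := div_pos hx0 hε
    have hq1 : x / ε ≤ 1 := (div_le_one hε).2 hxε
    have hrepr : ∀ σ ∈ Ioc (0:ℝ) 1, H x σ =
        (Ici (x / ε)).indicator (fun σ => ENNReal.ofReal (σ⁻¹ ^ 2 * (x / ε))) σ := by
      intro σ _
      have hmem : (x, σ) ∈ K ↔ x / ε ≤ σ := by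
        simp only [hKdef, mem_setOf_eq]
        rw [div_le_iff₀ hε, mul_comm]
      by_cases h : x / ε ≤ σ
      · simp [hHdef, indicator_of_mem (hmem.2 h), indicator_of_mem (mem_Ici.2 h)]
      · simp [hHdef, indicator_of_notMem (fun hc => h (hmem.1 hc)),
          indicator_of_notMem (fun hc => h (mem_Ici.1 hc))]
    rw [setLIntegral_congr_fun measurableSet_Ioc hrepr,
      lintegral_indicator measurableSet_Ici, Measure.restrict_restrict measurableSet_Ici]
    have hset : Ici (x / ε) ∩ Ioc 0 1 = Icc (x / ε) 1 := by
      ext σ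
      simp only [mem_inter_iff, mem_Ici, mem_Ioc, mem_Icc]
      constructor
      · rintro ⟨h1, _, h3⟩; exact ⟨h1, h3⟩
      · rintro ⟨h1, h2⟩; exact ⟨h1, lt_of_lt_of_le hq0 h1, h2⟩
    rw [hset]
    have hcont : ContinuousOn (fun σ : ℝ => σ⁻¹ ^ 2 * (x / ε)) (Icc (x / ε) 1) := by
      refine ContinuousOn.mul ?_ continuousOn_const
      refine ContinuousOn.pow ?_ 2
      exact ContinuousOn.inv₀ continuousOn_id fun σ hσ => (lt_of_lt_of_le hq0 hσ.1).ne'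
    have hint : IntegrableOn (fun σ : ℝ => σ⁻¹ ^ 2 * (x / ε)) (Icc (x / ε) 1) :=
      hcont.integrableOn_compact isCompact_Icc
    rw [← ofReal_integral_eq_lintegral_ofReal hint
      (ae_of_all _ fun σ => by positivity)]
    congr 1
    rw [MeasureTheory.integral_Icc_eq_integral_Ioc,
      ← intervalIntegral.integral_of_le hq1, intervalIntegral.integral_mul_const]
    have hzpow : ∀ σ : ℝ, σ⁻¹ ^ 2 = σ ^ (-2 : ℤ) := by
      intro σ; rw [zpow_neg, inv_pow]; norm_cast
    rw [show (fun σ : ℝ => σ⁻¹ ^ 2) = fun σ : ℝ => σ ^ (-2 : ℤ) from funext hzpow]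
    rw [integral_zpow (Or.inr ⟨by norm_num, by
      rw [Set.uIcc_of_le hq1]; exact fun hc => (lt_irrefl 0 (lt_of_lt_of_le hq0 hc.1)).elim⟩)]
    have hx0' : x ≠ 0 := hx0.ne'
    have hε0 : ε ≠ 0 := hε.ne'
    norm_num
    field_simp
    ring
  -- Step C: the x-integral of the square of the kernel
  have hC : ∀ σ ∈ Ioc (0:ℝ) 1,
      (∫⁻ x in Ioc (0:ℝ) ε, H x σ ^ 2 ∂g) = ENNReal.ofReal σ⁻¹ ^ 2 * J (ε * σ) := by
    intro σ hσ
    obtain ⟨hσ0, hσ1⟩ := hσ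
    have hεσ : 0 < ε * σ := mul_pos hε hσ0
    have hεσε : ε * σ ≤ ε := mul_le_of_le_one_right hε.le hσ1
    have hrepr : ∀ x : ℝ, H x σ ^ 2 =
        (Iic (ε * σ)).indicator (fun x => ENNReal.ofReal (σ⁻¹ ^ 2 * (x / ε)) ^ 2) x := by
      intro x
      have hmem : (x, σ) ∈ K ↔ x ∈ Iic (ε * σ) := by
        simp [hKdef, mem_setOf_eq, mem_Iic]
      by_cases h : x ∈ Iic (ε * σ)
      · simp [hHdef, indicator_of_mem (hmem.2 h), indicator_of_mem h, mul_pow]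
      · simp [hHdef, indicator_of_notMem (fun hc => h (hmem.1 hc)), indicator_of_notMem h]
    rw [lintegral_congr hrepr, lintegral_indicator measurableSet_Iic,
      Measure.restrict_restrict measurableSet_Iic]
    have hset : Iic (ε * σ) ∩ Ioc 0 ε = Ioc 0 (ε * σ) := by
      ext t
      simp only [mem_inter_iff, mem_Iic, mem_Ioc]
      constructor
      · rintro ⟨h1, h2, _⟩; exact ⟨h2, h1⟩
      · rintro ⟨h1, h2⟩; exact ⟨h2, h1, le_trans h2 hεσε⟩
    rw [hset]
    have hptwise : ∀ x ∈ Ioc (0:ℝ) (ε * σ),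
        ENNReal.ofReal (σ⁻¹ ^ 2 * (x / ε)) ^ 2 =
          ENNReal.ofReal σ⁻¹ ^ 2 * ENNReal.ofReal ((x / (ε * σ)) ^ 2) := by
      intro x hx
      have hxnn : 0 ≤ x := hx.1.le
      have h1 : (0:ℝ) ≤ σ⁻¹ ^ 2 * (x / ε) := by positivity
      rw [← ENNReal.ofReal_pow h1, ← ENNReal.ofReal_pow (inv_nonneg.2 hσ0.le),
        ← ENNReal.ofReal_mul (by positivity)]
      congr 1
      rw [div_mul_eq_div_div, div_eq_mul_inv (x / ε)]
      ring
    rw [setLIntegral_congr_fun measurableSet_Ioc hptwise,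
      lintegral_const_mul' _ _ (ENNReal.pow_ne_top ENNReal.ofReal_ne_top)]
  -- the boundedness hypothesis for Minkowski
  have hbd : ∀ᵐ x ∂(g.restrict (Ioc (0:ℝ) ε)), (∫⁻ σ, H x σ ∂(volume.restrict (Ioc (0:ℝ) 1))) ≤ 1 := by
    filter_upwards [ae_restrict_mem measurableSet_Ioc] with x hx
    rw [hA x hx]
    refine ENNReal.ofReal_le_one.2 ?_
    have : 0 ≤ x / ε := div_nonneg hx.1.le hε.le
    linarith
  have hmink := minkowski2 (g.restrict (Ioc (0:ℝ) ε)) (volume.restrict (Ioc (0:ℝ) 1)) H hH hbd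
  -- rewrite the LHS of hmink
  set S := ∫⁻ x in Ioc (0:ℝ) ε, ENNReal.ofReal ((1 - x / ε) ^ 2) ∂g with hSdef
  have hL : (∫⁻ x, (∫⁻ σ, H x σ ∂(volume.restrict (Ioc (0:ℝ) 1))) ^ 2
      ∂(g.restrict (Ioc (0:ℝ) ε))) = S := by
    refine setLIntegral_congr_fun measurableSet_Ioc (fun x hx => ?_)
    rw [hA x hx, ← ENNReal.ofReal_pow (by
      have := (div_le_one hε).2 hx.2
      linarith)]
  -- rewrite the RHS of hmink
  have hR : (∫⁻ σ, (∫⁻ x, H x σ ^ 2 ∂(g.restrict (Ioc (0:ℝ) ε))) ^ (1/2:ℝ)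
      ∂(volume.restrict (Ioc (0:ℝ) 1))) =
      ∫⁻ σ in Ioc (0:ℝ) 1, ENNReal.ofReal σ⁻¹ * J (ε * σ) ^ (1/2:ℝ) := by
    refine setLIntegral_congr_fun measurableSet_Ioc (fun σ hσ => ?_)
    rw [hC σ hσ, ENNReal.mul_rpow_of_nonneg _ _ (by norm_num), sq_rpow_half]
  rw [hL, hR] at hmink
  -- rewrite the goal
  have hεhalf : (ε ^ (-(α/2)) : ℝ) ^ 2 = ε ^ (-α) := by
    rw [← Real.rpow_natCast (ε ^ (-(α/2))) 2, ← Real.rpow_mul hε.le]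
    norm_num
  have hLHS : NalphaE g α ε ^ (1/2:ℝ) = ENNReal.ofReal (ε ^ (-(α/2))) * S ^ (1/2:ℝ) := by
    rw [NalphaE, show N0e g ε = S from hIccIoc ε hε.le _, ← hεhalf,
      ENNReal.ofReal_pow (Real.rpow_nonneg hε.le _),
      ENNReal.mul_rpow_of_nonneg _ _ (by norm_num), sq_rpow_half]
  have hRHS : ∀ σ ∈ Ioc (0:ℝ) 1,
      ENNReal.ofReal (σ ^ (α / 2 - 1)) * (Ae g α (ε * σ)) ^ (1/2:ℝ) =
        ENNReal.ofReal (ε ^ (-(α/2))) * (ENNReal.ofReal σ⁻¹ * J (ε * σ) ^ (1/2:ℝ)) := by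
    intro σ hσ
    obtain ⟨hσ0, hσ1⟩ := hσ
    have hεσ : 0 < ε * σ := mul_pos hε hσ0
    have h1 : Ae g α (ε * σ) = ENNReal.ofReal ((ε * σ) ^ (-α)) * J (ε * σ) := by
      rw [Ae, hIccIoc _ hεσ.le]
    have h2 : ((ε * σ) ^ (-(α/2)) : ℝ) ^ 2 = (ε * σ) ^ (-α) := by
      rw [← Real.rpow_natCast ((ε * σ) ^ (-(α/2))) 2, ← Real.rpow_mul hεσ.le]
      norm_num
    have h3 : (Ae g α (ε * σ)) ^ (1/2:ℝ) =
        ENNReal.ofReal ((ε * σ) ^ (-(α/2))) * J (ε * σ) ^ (1/2:ℝ) := by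
      rw [h1, ← h2, ENNReal.ofReal_pow (Real.rpow_nonneg hεσ.le _),
        ENNReal.mul_rpow_of_nonneg _ _ (by norm_num), sq_rpow_half]
    rw [h3, ← mul_assoc, ← ENNReal.ofReal_mul (Real.rpow_nonneg hσ0.le _)]
    have h4 : σ ^ (α / 2 - 1) * (ε * σ) ^ (-(α/2)) = ε ^ (-(α/2)) * σ⁻¹ := by
      rw [Real.mul_rpow hε.le hσ0.le, ← mul_assoc, mul_comm (σ ^ (α/2-1)), mul_assoc,
        ← Real.rpow_add hσ0, show (α/2 - 1 + -(α/2)) = (-1:ℝ) by ring, Real.rpow_neg_one]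
    rw [h4, ENNReal.ofReal_mul (Real.rpow_nonneg hε.le _), mul_assoc]
  rw [hLHS, setLIntegral_congr_fun measurableSet_Ioc hRHS,
    lintegral_const_mul' _ _ ENNReal.ofReal_ne_top]
  exact mul_le_mul_right hmink _
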